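/- Let ν ≥ 1 and n ≥ 1 be integers, let a > 0 and b ≥ 0 be reals, let ξ satisfy 0 < ξ < a, let M be an integer with M > ν·b/ξ, let p_tr ∈ (0, 1], and fix an integer m with window W = [m−(2M+1)ν, m+(2M+1)ν) ∩ ℤ. Let Ω be a measurable space, and for each s > 0 let μ_s be a probability measure on Ω and let A_d(s), B_d(s) : Ω → ℝ (d ∈ W) be measurable. Assume: for every d ∈ W and every γ < a, μ_s{ A_d(s) ≥ γ·s } → 1 as s → ∞; and for every d ∈ W and every γ > b, μ_s{ B_d(s) ≤ γ·s } → 1 as s → ∞. For each s set ρ(s) = ξ·s/(3ν) and let OPT_m(s) be the event that: A_d(s) > 3ν(ρ(s) − log p_tr) for all d ∈ [m−2Mν, m+2Mν); Σ_{d=m+2Mν}^{m+(2M+1)ν−1} B_d(s) ≤ 3Mνρ(s) + (ν+1)·log p_tr; and Σ_{d=m−(2M+1)ν}^{m−2Mν−1} B_d(s) ≤ 3Mνρ(s) + ν·log p_tr. Then μ_s(OPT_m(s)) → 1 as s → ∞. -/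

import Mathlib

open Finset Filter MeasureTheory

private lemma aux_compl_tendsto {Ω : Type*} [MeasurableSpace Ω]
    (μ : ℝ → Measure Ω)
    (hμ : ∀ s : ℝ, 0 < s → IsProbabilityMeasure (μ s))
    (E : ℝ → Set Ω) (hE : ∀ s, MeasurableSet (E s))
    (h : Tendsto (fun s => μ s (E s)) atTop (nhds 1)) :
    Tendsto (fun s => μ s (E s)ᶜ) atTop (nhds 0) := by
  have h2 : Tendsto (fun s => (1 : ENNReal) - μ s (E s)) atTop (nhds 0) := by
    have := ENNReal.Tendsto.sub (tendsto_const_nhds (x := (1 : ENNReal)) (f := atTop)) h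
      (Or.inl ENNReal.one_ne_top)
    simpa using this
  refine h2.congr' ?_
  filter_upwards [eventually_gt_atTop (0 : ℝ)] with s hs
  haveI := hμ s hs
  rw [prob_compl_eq_one_sub (hE s)]

theorem stmt_3 {Ω : Type*} [MeasurableSpace Ω]
    (ν : ℕ) (hν : 1 ≤ ν) (n : ℕ) (hn : 1 ≤ n)
    (a b : ℝ) (ha : 0 < a) (hb : 0 ≤ b)
    (ξ : ℝ) (hξ1 : 0 < ξ) (hξ2 : ξ < a)
    (M : ℤ) (hM : (ν : ℝ) * b / ξ < (M : ℝ))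
    (ptr : ℝ) (hptr1 : 0 < ptr) (hptr2 : ptr ≤ 1)
    (m : ℤ)
    (μ : ℝ → Measure Ω) (hμ : ∀ s : ℝ, 0 < s → IsProbabilityMeasure (μ s))
    (A B : ℝ → ℤ → Ω → ℝ)
    (hAmeas : ∀ s d, Measurable (A s d)) (hBmeas : ∀ s d, Measurable (B s d))
    (hA : ∀ d ∈ Finset.Ico (m - (2 * M + 1) * ν) (m + (2 * M + 1) * ν),
      ∀ γ : ℝ, γ < a →
        Tendsto (fun s : ℝ => μ s {ω : Ω | γ * s ≤ A s d ω}) atTop (nhds 1))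
    (hB : ∀ d ∈ Finset.Ico (m - (2 * M + 1) * ν) (m + (2 * M + 1) * ν),
      ∀ γ : ℝ, b < γ →
        Tendsto (fun s : ℝ => μ s {ω : Ω | B s d ω ≤ γ * s}) atTop (nhds 1)) :
    Tendsto (fun s : ℝ => μ s {ω : Ω |
        (∀ d : ℤ, m - 2 * M * ν ≤ d → d < m + 2 * M * ν →
          3 * (ν : ℝ) * (ξ * s / (3 * ν) - Real.log ptr) < A s d ω) ∧
        (∑ d ∈ Finset.Ico (m + 2 * M * ν) (m + (2 * M + 1) * ν), B s d ω
          ≤ 3 * (M : ℝ) * (ν : ℝ) * (ξ * s / (3 * ν)) + ((ν : ℝ) + 1) * Real.log ptr) ∧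
        (∑ d ∈ Finset.Ico (m - (2 * M + 1) * ν) (m - 2 * M * ν), B s d ω
          ≤ 3 * (M : ℝ) * (ν : ℝ) * (ξ * s / (3 * ν)) + (ν : ℝ) * Real.log ptr)})
      atTop (nhds 1) := by
  classical
  have hνR : (0:ℝ) < (ν:ℝ) := by exact_mod_cast Nat.lt_of_lt_of_le Nat.zero_lt_one hν
  have hν0 : (ν:ℝ) ≠ 0 := ne_of_gt hνR
  have hlog : Real.log ptr ≤ 0 := Real.log_nonpos (le_of_lt hptr1) hptr2
  have hMR : (0:ℝ) < (M:ℝ) := lt_of_le_of_lt (by positivity) hM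
  have hMZ : (0:ℤ) < M := by exact_mod_cast hMR
  have hνZ : (0:ℤ) ≤ (ν:ℤ) := Int.natCast_nonneg ν
  set γ₁ : ℝ := (ξ + a)/2 with hγ₁def
  set γ₂ : ℝ := (b + (M:ℝ)*ξ/(ν:ℝ))/2 with hγ₂def
  have hξγ₁ : ξ < γ₁ := by rw [hγ₁def]; linarith
  have hγ₁a : γ₁ < a := by rw [hγ₁def]; linarith
  have key : (ν:ℝ)*b < (M:ℝ)*ξ := by
    have := (div_lt_iff₀ hξ1).1 hM; linarith
  have hbγ₂ : b < γ₂ := by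
    have h1 : b < (M:ℝ)*ξ/(ν:ℝ) := (lt_div_iff₀ hνR).2 (by linarith)
    rw [hγ₂def]; linarith
  have hνγ₂ : (ν:ℝ)*γ₂ < (M:ℝ)*ξ := by
    have h1 : (ν:ℝ)*γ₂ = ((ν:ℝ)*b + (M:ℝ)*ξ)/2 := by
      rw [hγ₂def]; field_simp
    linarith
  -- eventual scalar inequalities
  have ev1 : ∀ᶠ s : ℝ in atTop, ξ*s - 3*(ν:ℝ)*Real.log ptr < γ₁*s := by
    have ht : Tendsto (fun s : ℝ => (γ₁ - ξ)*s) atTop atTop :=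
      Tendsto.const_mul_atTop (by linarith) tendsto_id
    filter_upwards [ht.eventually_ge_atTop (-(3*(ν:ℝ)*Real.log ptr) + 1)] with s hs
    have : (γ₁ - ξ)*s = γ₁*s - ξ*s := by ring
    linarith
  have ev2 : ∀ᶠ s : ℝ in atTop,
      (ν:ℝ)*(γ₂*s) ≤ (M:ℝ)*ξ*s + ((ν:ℝ)+1)*Real.log ptr := by
    have ht : Tendsto (fun s : ℝ => ((M:ℝ)*ξ - (ν:ℝ)*γ₂)*s) atTop atTop :=
      Tendsto.const_mul_atTop (by linarith) tendsto_id
    filter_upwards [ht.eventually_ge_atTop (-(((ν:ℝ)+1)*Real.log ptr))] with s hs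
    have : ((M:ℝ)*ξ - (ν:ℝ)*γ₂)*s = (M:ℝ)*ξ*s - (ν:ℝ)*(γ₂*s) := by ring
    linarith
  have ev3 : ∀ᶠ s : ℝ in atTop,
      (ν:ℝ)*(γ₂*s) ≤ (M:ℝ)*ξ*s + (ν:ℝ)*Real.log ptr := by
    have ht : Tendsto (fun s : ℝ => ((M:ℝ)*ξ - (ν:ℝ)*γ₂)*s) atTop atTop :=
      Tendsto.const_mul_atTop (by linarith) tendsto_id
    filter_upwards [ht.eventually_ge_atTop (-((ν:ℝ)*Real.log ptr))] with s hs
    have : ((M:ℝ)*ξ - (ν:ℝ)*γ₂)*s = (M:ℝ)*ξ*s - (ν:ℝ)*(γ₂*s) := by ring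
    linarith
  -- index windows
  set mid : Finset ℤ := Finset.Ico (m - 2*M*(ν:ℤ)) (m + 2*M*(ν:ℤ)) with hmiddef
  set rgt : Finset ℤ := Finset.Ico (m + 2*M*(ν:ℤ)) (m + (2*M+1)*(ν:ℤ)) with hrgtdef
  set lft : Finset ℤ := Finset.Ico (m - (2*M+1)*(ν:ℤ)) (m - 2*M*(ν:ℤ)) with hlftdef
  have e0 : (2*M+1)*(ν:ℤ) = 2*M*(ν:ℤ) + (ν:ℤ) := by ring
  have eM : (0:ℤ) ≤ 2*M*(ν:ℤ) := mul_nonneg (by linarith) hνZ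
  have e1 : m - (2*M+1)*(ν:ℤ) ≤ m - 2*M*(ν:ℤ) := by linarith
  have e2 : m + 2*M*(ν:ℤ) ≤ m + (2*M+1)*(ν:ℤ) := by linarith
  have e3 : m - (2*M+1)*(ν:ℤ) ≤ m + 2*M*(ν:ℤ) := by linarith
  have e4 : m - 2*M*(ν:ℤ) ≤ m + (2*M+1)*(ν:ℤ) := by linarith
  have hmidsub : mid ⊆ Finset.Ico (m - (2*M+1)*(ν:ℤ)) (m + (2*M+1)*(ν:ℤ)) :=
    Finset.Ico_subset_Ico e1 e2
  have hrgtsub : rgt ⊆ Finset.Ico (m - (2*M+1)*(ν:ℤ)) (m + (2*M+1)*(ν:ℤ)) :=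
    Finset.Ico_subset_Ico e3 le_rfl
  have hlftsub : lft ⊆ Finset.Ico (m - (2*M+1)*(ν:ℤ)) (m + (2*M+1)*(ν:ℤ)) :=
    Finset.Ico_subset_Ico le_rfl e4
  have hcard_r : rgt.card = ν := by
    rw [hrgtdef, Int.card_Ico]
    have : m + (2*M+1)*(ν:ℤ) - (m + 2*M*(ν:ℤ)) = (ν:ℤ) := by ring
    rw [this, Int.toNat_natCast]
  have hcard_l : lft.card = ν := by
    rw [hlftdef, Int.card_Ico]
    have : m - 2*M*(ν:ℤ) - (m - (2*M+1)*(ν:ℤ)) = (ν:ℤ) := by ring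
    rw [this, Int.toNat_natCast]
  -- complement probability sums tend to zero
  have hTmid : ∀ d ∈ mid,
      Tendsto (fun s => μ s {ω | γ₁*s ≤ A s d ω}ᶜ) atTop (nhds 0) := fun d hd =>
    aux_compl_tendsto μ hμ _ (fun s => measurableSet_le measurable_const (hAmeas s d))
      (hA d (hmidsub hd) γ₁ hγ₁a)
  have hTrgt : ∀ d ∈ rgt,
      Tendsto (fun s => μ s {ω | B s d ω ≤ γ₂*s}ᶜ) atTop (nhds 0) := fun d hd =>
    aux_compl_tendsto μ hμ _ (fun s => measurableSet_le (hBmeas s d) measurable_const)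
      (hB d (hrgtsub hd) γ₂ hbγ₂)
  have hTlft : ∀ d ∈ lft,
      Tendsto (fun s => μ s {ω | B s d ω ≤ γ₂*s}ᶜ) atTop (nhds 0) := fun d hd =>
    aux_compl_tendsto μ hμ _ (fun s => measurableSet_le (hBmeas s d) measurable_const)
      (hB d (hlftsub hd) γ₂ hbγ₂)
  set S : ℝ → ENNReal := fun s =>
    (∑ d ∈ mid, μ s {ω | γ₁*s ≤ A s d ω}ᶜ) +
    (∑ d ∈ rgt, μ s {ω | B s d ω ≤ γ₂*s}ᶜ) +
    (∑ d ∈ lft, μ s {ω | B s d ω ≤ γ₂*s}ᶜ) with hSdef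
  have hS : Tendsto S atTop (nhds 0) := by
    have h1 := tendsto_finset_sum (f := fun d s => μ s {ω | γ₁*s ≤ A s d ω}ᶜ) mid hTmid
    have h2 := tendsto_finset_sum (f := fun d s => μ s {ω | B s d ω ≤ γ₂*s}ᶜ) rgt hTrgt
    have h3 := tendsto_finset_sum (f := fun d s => μ s {ω | B s d ω ≤ γ₂*s}ᶜ) lft hTlft
    have := (h1.add h2).add h3
    simpa [hSdef] using this
  have hlow : Tendsto (fun s => 1 - S s) atTop (nhds 1) := by
    have := ENNReal.Tendsto.sub (tendsto_const_nhds (x := (1:ENNReal)) (f := atTop)) hS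
      (Or.inl ENNReal.one_ne_top)
    simpa using this
  refine tendsto_of_tendsto_of_tendsto_of_le_of_le' hlow
    (tendsto_const_nhds (x := (1:ENNReal)) (f := atTop)) ?_ ?_
  · filter_upwards [ev1, ev2, ev3, eventually_gt_atTop (0:ℝ)] with s h1 h2 h3 hs
    haveI := hμ s hs
    set O : Set Ω := {ω : Ω |
        (∀ d : ℤ, m - 2 * M * ν ≤ d → d < m + 2 * M * ν →
          3 * (ν : ℝ) * (ξ * s / (3 * ν) - Real.log ptr) < A s d ω) ∧
        (∑ d ∈ Finset.Ico (m + 2 * M * ν) (m + (2 * M + 1) * ν), B s d ω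
          ≤ 3 * (M : ℝ) * (ν : ℝ) * (ξ * s / (3 * ν)) + ((ν : ℝ) + 1) * Real.log ptr) ∧
        (∑ d ∈ Finset.Ico (m - (2 * M + 1) * ν) (m - 2 * M * ν), B s d ω
          ≤ 3 * (M : ℝ) * (ν : ℝ) * (ξ * s / (3 * ν)) + (ν : ℝ) * Real.log ptr)} with hOdef
    have hid1 : ∀ x : ℝ, 3*(ν:ℝ)*(ξ*s/(3*(ν:ℝ)) - x) = ξ*s - 3*(ν:ℝ)*x := by
      intro x; field_simp
    have hid2 : 3*(M:ℝ)*(ν:ℝ)*(ξ*s/(3*(ν:ℝ))) = (M:ℝ)*ξ*s := by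
      field_simp
    have hsub : ((⋂ d ∈ mid, {ω : Ω | γ₁*s ≤ A s d ω}) ∩
        (⋂ d ∈ rgt, {ω : Ω | B s d ω ≤ γ₂*s})) ∩
        (⋂ d ∈ lft, {ω : Ω | B s d ω ≤ γ₂*s}) ⊆ O := by
      rintro ω ⟨⟨hω1, hω2⟩, hω3⟩
      refine ⟨?_, ?_, ?_⟩
      · intro d hd1 hd2
        have hmem : d ∈ mid := Finset.mem_Ico.2 ⟨hd1, hd2⟩
        have hAd : γ₁*s ≤ A s d ω := Set.mem_iInter₂.1 hω1 d hmem
        rw [hid1]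
        linarith
      · have hsum : ∑ d ∈ rgt, B s d ω ≤ rgt.card • (γ₂*s) :=
          Finset.sum_le_card_nsmul _ _ _ (fun d hd => Set.mem_iInter₂.1 hω2 d hd)
        rw [hcard_r, nsmul_eq_mul] at hsum
        show ∑ d ∈ rgt, B s d ω ≤ _
        rw [hid2]
        linarith
      · have hsum : ∑ d ∈ lft, B s d ω ≤ lft.card • (γ₂*s) :=
          Finset.sum_le_card_nsmul _ _ _ (fun d hd => Set.mem_iInter₂.1 hω3 d hd)
        rw [hcard_l, nsmul_eq_mul] at hsum
        show ∑ d ∈ lft, B s d ω ≤ _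
        rw [hid2]
        linarith
    have h5 : μ s Oᶜ ≤ S s := by
      have hstep : μ s Oᶜ ≤
          μ s ((⋂ d ∈ mid, {ω : Ω | γ₁*s ≤ A s d ω}) ∩
            (⋂ d ∈ rgt, {ω : Ω | B s d ω ≤ γ₂*s}))ᶜ +
          μ s (⋂ d ∈ lft, {ω : Ω | B s d ω ≤ γ₂*s})ᶜ := by
        refine le_trans (measure_mono (Set.compl_subset_compl.2 hsub)) ?_
        rw [Set.compl_inter]
        exact measure_union_le _ _
      have hstep2 : μ s ((⋂ d ∈ mid, {ω : Ω | γ₁*s ≤ A s d ω}) ∩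
            (⋂ d ∈ rgt, {ω : Ω | B s d ω ≤ γ₂*s}))ᶜ ≤
          μ s (⋂ d ∈ mid, {ω : Ω | γ₁*s ≤ A s d ω})ᶜ +
          μ s (⋂ d ∈ rgt, {ω : Ω | B s d ω ≤ γ₂*s})ᶜ := by
        rw [Set.compl_inter]
        exact measure_union_le _ _
      have hb1 : μ s (⋂ d ∈ mid, {ω : Ω | γ₁*s ≤ A s d ω})ᶜ ≤
          ∑ d ∈ mid, μ s {ω : Ω | γ₁*s ≤ A s d ω}ᶜ := by
        rw [Set.compl_iInter₂]
        exact measure_biUnion_finset_le _ _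
      have hb2 : μ s (⋂ d ∈ rgt, {ω : Ω | B s d ω ≤ γ₂*s})ᶜ ≤
          ∑ d ∈ rgt, μ s {ω : Ω | B s d ω ≤ γ₂*s}ᶜ := by
        rw [Set.compl_iInter₂]
        exact measure_biUnion_finset_le _ _
      have hb3 : μ s (⋂ d ∈ lft, {ω : Ω | B s d ω ≤ γ₂*s})ᶜ ≤
          ∑ d ∈ lft, μ s {ω : Ω | B s d ω ≤ γ₂*s}ᶜ := by
        rw [Set.compl_iInter₂]
        exact measure_biUnion_finset_le _ _
      calc μ s Oᶜ ≤ _ := hstep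
        _ ≤ _ := add_le_add hstep2 hb3
        _ ≤ S s := by rw [hSdef]; exact add_le_add (add_le_add hb1 hb2) le_rfl
    have h6 : (1:ENNReal) ≤ μ s O + μ s Oᶜ := by
      calc (1:ENNReal) = μ s Set.univ := (measure_univ).symm
        _ = μ s (O ∪ Oᶜ) := by rw [Set.union_compl_self]
        _ ≤ μ s O + μ s Oᶜ := measure_union_le _ _
    exact tsub_le_iff_right.2 (le_trans h6 (add_le_add_right h5 _))
  · filter_upwards [eventually_gt_atTop (0:ℝ)] with s hs
    haveI := hμ s hs
    exact prob_le_one
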